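/- Let A be a fixed set and R the reader monad on Set, RX := X^A. For any Set monad U, let ρ^U : UR ⇒ RU be the distributive law defined by ρ^U_X(z)(a) := U(â_X)(z) for z ∈ U(X^A) and a ∈ A, where â_X : X^A → X is evaluation at a, â_X(h) = h(a). Then for any monads S, T on Set and ANY natural transformation λ : TS ⇒ ST, the Yang–Baxter equation ρ^S T ∘ Sρ^T ∘ λR = Rλ ∘ ρ^T S ∘ Tρ^S holds. -/

import Mathlib

open CategoryTheory

universe u

/-- The distributive law `ρ^U : UR ⇒ RU` of a `Set`-monad `U` over the reader
monad `R` (with `RX = X^A`): `ρ^U_X(z)(a) = U(â)(z)`, where `â` is evaluation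
at `a`. -/
def rhoLaw (A : Type u) (U : Monad (Type u)) (X : Type u) :
    U.obj (A → X) → (A → U.obj X) :=
  fun z a => U.map (TypeCat.ofHom (fun h : A → X => h a)) z

/-- Proposition 4.10. For any monads `S`, `T` on `Set` and any
natural transformation `λ : TS ⇒ ST`, the Yang–Baxter equation
`ρ^S T ∘ Sρ^T ∘ λR = Rλ ∘ ρ^T S ∘ Tρ^S` holds. -/
theorem yb_reader (A : Type u) (S T : Monad (Type u))
    (l : (S.toFunctor ⋙ T.toFunctor) ⟶ (T.toFunctor ⋙ S.toFunctor)) :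
    ∀ X : Type u,
      l.app (A → X) ≫ S.map (TypeCat.ofHom (rhoLaw A T X)) ≫ TypeCat.ofHom (rhoLaw A S (T.obj X)) =
      T.map (TypeCat.ofHom (rhoLaw A S X)) ≫ TypeCat.ofHom (rhoLaw A T (S.obj X)) ≫
        TypeCat.ofHom (fun (h : A → T.obj (S.obj X)) (a : A) => l.app X (h a)) := by
  intro X
  apply ConcreteCategory.hom_ext; intro z
  funext a
  have hnat := congrArg (fun f => f z) (l.naturality (TypeCat.ofHom (fun h : A → X => h a)))
  simp only [Functor.comp_obj, Functor.comp_map, types_comp_apply] at hnat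
  simp only [types_comp_apply, rhoLaw, TypeCat.ofHom_apply]
  rw [← FunctorToTypes.map_comp_apply, ← FunctorToTypes.map_comp_apply]
  exact hnat.symm
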